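/- Fix an integer K ≥ 1 and an integer 1 ≤ j ≤ K. For a real number d, the following four conditions are equivalent: (i) d/2 − 1/(2K) = sinh(ᾱ_{j−1}·E)·sinh(a_j·E)·sinh(α̲_j·E); (ii) 1 − j/K − d/2 + 1/(2K) = cosh(ᾱ_{j−1}·E)·cosh(a_j·E)·sinh(α̲_j·E); (iii) d/2 + 1/(2K) = cosh(ᾱ_{j−1}·E)·sinh(a_j·E)·cosh(α̲_j·E); (iv) j/K − d/2 − 1/(2K) = sinh(ᾱ_{j−1}·E)·cosh(a_j·E)·cosh(α̲_j·E). Moreover, any real d satisfying (i) equals sinh(a_j·E)·cosh((1−a_j)·E). -/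

import Mathlib

open Real Finset

/-- The ground-state energy `E = log(1+√2) = arcsinh(1)`, so that `sinh E = 1`. -/
noncomputable def groundE : ℝ := Real.log (1 + Real.sqrt 2)

/-- `ᾱ_i = (1/2)·(1 + arsinh(2i/K − 1)/E)` for `0 ≤ i ≤ K`. -/
noncomputable def abar (K i : ℕ) : ℝ :=
  (1 / 2) * (1 + Real.arsinh (2 * (i : ℝ) / (K : ℝ) - 1) / groundE)

/-- `a_i = ᾱ_i − ᾱ_{i−1}` for `1 ≤ i ≤ K`. -/
noncomputable def aseq (K i : ℕ) : ℝ := abar K i - abar K (i - 1)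

/-- `α̲_i = 1 − ᾱ_i`. -/
noncomputable def aund (K i : ℕ) : ℝ := 1 - abar K i

private lemma sinhE : Real.sinh groundE = 1 := by
  have h : groundE = Real.arsinh 1 := by
    rw [groundE, Real.arsinh]; norm_num
  rw [h, Real.sinh_arsinh]

/-- product identity 1 -/
private lemma prodP1 (E u v : ℝ) :
    Real.cosh ((E + u) / 2) * Real.cosh ((v - u) / 2) * Real.sinh ((E - v) / 2) =
      (Real.sinh E - Real.sinh v) / 2 -
        Real.sinh ((E + u) / 2) * Real.sinh ((v - u) / 2) * Real.sinh ((E - v) / 2) := by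
  have h1 : Real.cosh ((E + v) / 2) =
      Real.cosh ((E + u) / 2) * Real.cosh ((v - u) / 2) +
        Real.sinh ((E + u) / 2) * Real.sinh ((v - u) / 2) := by
    rw [show (E + v) / 2 = (E + u) / 2 + (v - u) / 2 by ring, Real.cosh_add]
  have h2 : Real.cosh ((E + v) / 2) * Real.sinh ((E - v) / 2) =
      (Real.sinh E - Real.sinh v) / 2 := by
    rw [show Real.sinh E = Real.sinh ((E + v) / 2 + (E - v) / 2) by rw [show (E + v) / 2 + (E - v) / 2 = E by ring],
      show Real.sinh v = Real.sinh ((E + v) / 2 - (E - v) / 2) by rw [show (E + v) / 2 - (E - v) / 2 = v by ring],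
      Real.sinh_add, Real.sinh_sub]
    ring
  linear_combination -Real.sinh ((E - v) / 2) * h1 + h2

/-- product identity 2 -/
private lemma prodP2 (E u v : ℝ) :
    Real.cosh ((E + u) / 2) * Real.sinh ((v - u) / 2) * Real.cosh ((E - v) / 2) =
      (Real.sinh v - Real.sinh u) / 2 +
        Real.sinh ((E + u) / 2) * Real.sinh ((v - u) / 2) * Real.sinh ((E - v) / 2) := by
  have h1 : Real.cosh ((u + v) / 2) =
      Real.cosh ((E + u) / 2) * Real.cosh ((E - v) / 2) -
        Real.sinh ((E + u) / 2) * Real.sinh ((E - v) / 2) := by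
    rw [show (u + v) / 2 = (E + u) / 2 - (E - v) / 2 by ring, Real.cosh_sub]
  have h2 : Real.sinh ((v - u) / 2) * Real.cosh ((u + v) / 2) =
      (Real.sinh v - Real.sinh u) / 2 := by
    rw [show Real.sinh v = Real.sinh ((v - u) / 2 + (u + v) / 2) by rw [show (v - u) / 2 + (u + v) / 2 = v by ring],
      show Real.sinh u = Real.sinh ((u + v) / 2 - (v - u) / 2) by rw [show (u + v) / 2 - (v - u) / 2 = u by ring],
      Real.sinh_add, Real.sinh_sub]
    ring
  linear_combination -Real.sinh ((v - u) / 2) * h1 + h2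

/-- product identity 3 -/
private lemma prodP3 (E u v : ℝ) :
    Real.sinh ((E + u) / 2) * Real.cosh ((v - u) / 2) * Real.cosh ((E - v) / 2) =
      (Real.sinh E + Real.sinh u) / 2 -
        Real.sinh ((E + u) / 2) * Real.sinh ((v - u) / 2) * Real.sinh ((E - v) / 2) := by
  have h1 : Real.cosh ((E - u) / 2) =
      Real.cosh ((v - u) / 2) * Real.cosh ((E - v) / 2) +
        Real.sinh ((v - u) / 2) * Real.sinh ((E - v) / 2) := by
    rw [show (E - u) / 2 = (v - u) / 2 + (E - v) / 2 by ring, Real.cosh_add]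
  have h2 : Real.sinh ((E + u) / 2) * Real.cosh ((E - u) / 2) =
      (Real.sinh E + Real.sinh u) / 2 := by
    rw [show Real.sinh E = Real.sinh ((E + u) / 2 + (E - u) / 2) by rw [show (E + u) / 2 + (E - u) / 2 = E by ring],
      show Real.sinh u = Real.sinh ((E + u) / 2 - (E - u) / 2) by rw [show (E + u) / 2 - (E - u) / 2 = u by ring],
      Real.sinh_add, Real.sinh_sub]
    ring
  linear_combination -Real.sinh ((E + u) / 2) * h1 + h2

/-- product identity 4: `sinh B · cosh(E−B) = S + (iii) RHS`. -/
private lemma prodP4 (E u v : ℝ) :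
    Real.sinh ((v - u) / 2) * Real.cosh ((2 * E + u - v) / 2) =
      Real.sinh ((E + u) / 2) * Real.sinh ((v - u) / 2) * Real.sinh ((E - v) / 2) +
        Real.cosh ((E + u) / 2) * Real.sinh ((v - u) / 2) * Real.cosh ((E - v) / 2) := by
  rw [show (2 * E + u - v) / 2 = (E + u) / 2 + (E - v) / 2 by ring, Real.cosh_add]
  ring

set_option maxHeartbeats 1000000 in
/-- **Lemma 3.2**: the four relations for the optimal Hamming distance `d` are all equivalent,
and any `d` satisfying them equals `sinh(a_j·E)·cosh((1−a_j)·E)`. -/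
theorem optimal_d_equivalences (K : ℕ) (hK : 1 ≤ K) (j : ℕ) (hj1 : 1 ≤ j) (hjK : j ≤ K)
    (d : ℝ) :
    ((d / 2 - 1 / (2 * (K : ℝ)) =
        Real.sinh (abar K (j - 1) * groundE) * Real.sinh (aseq K j * groundE) *
          Real.sinh (aund K j * groundE)) ↔
      (1 - (j : ℝ) / (K : ℝ) - d / 2 + 1 / (2 * (K : ℝ)) =
        Real.cosh (abar K (j - 1) * groundE) * Real.cosh (aseq K j * groundE) *
          Real.sinh (aund K j * groundE))) ∧
    ((d / 2 - 1 / (2 * (K : ℝ)) =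
        Real.sinh (abar K (j - 1) * groundE) * Real.sinh (aseq K j * groundE) *
          Real.sinh (aund K j * groundE)) ↔
      (d / 2 + 1 / (2 * (K : ℝ)) =
        Real.cosh (abar K (j - 1) * groundE) * Real.sinh (aseq K j * groundE) *
          Real.cosh (aund K j * groundE))) ∧
    ((d / 2 - 1 / (2 * (K : ℝ)) =
        Real.sinh (abar K (j - 1) * groundE) * Real.sinh (aseq K j * groundE) *
          Real.sinh (aund K j * groundE)) ↔
      ((j : ℝ) / (K : ℝ) - d / 2 - 1 / (2 * (K : ℝ)) =
        Real.sinh (abar K (j - 1) * groundE) * Real.cosh (aseq K j * groundE) *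
          Real.cosh (aund K j * groundE))) ∧
    ((d / 2 - 1 / (2 * (K : ℝ)) =
        Real.sinh (abar K (j - 1) * groundE) * Real.sinh (aseq K j * groundE) *
          Real.sinh (aund K j * groundE)) →
      d = Real.sinh (aseq K j * groundE) * Real.cosh ((1 - aseq K j) * groundE)) := by
  have hE : Real.sinh groundE = 1 := sinhE
  have hEne : groundE ≠ 0 := by
    intro h; rw [h, Real.sinh_zero] at hE; norm_num at hE
  have hKne : (K : ℝ) ≠ 0 := by positivity
  set E := groundE with hEdef
  set u := Real.arsinh (2 * ((j : ℝ) - 1) / (K : ℝ) - 1) with hu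
  set v := Real.arsinh (2 * (j : ℝ) / (K : ℝ) - 1) with hv
  have hcast : ((j - 1 : ℕ) : ℝ) = (j : ℝ) - 1 := by
    push_cast [hj1]; ring
  have hsu : Real.sinh u = 2 * ((j : ℝ) - 1) / (K : ℝ) - 1 := Real.sinh_arsinh _
  have hsv : Real.sinh v = 2 * (j : ℝ) / (K : ℝ) - 1 := Real.sinh_arsinh _
  clear_value E u v
  have hA : abar K (j - 1) * E = (E + u) / 2 := by
    rw [abar, hcast, ← hu, ← hEdef]; field_simp
  have hAj : abar K j * E = (E + v) / 2 := by
    rw [abar, ← hv, ← hEdef]; field_simp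
  have hB : aseq K j * E = (v - u) / 2 := by
    rw [aseq, sub_mul, hA, hAj]; ring
  have hC : aund K j * E = (E - v) / 2 := by
    rw [aund, one_sub_mul, hAj]; ring
  have hB' : (1 - aseq K j) * E = (2 * E + u - v) / 2 := by
    rw [one_sub_mul, hB]; ring
  rw [hA, hB, hC, hB']
  have P1 := prodP1 E u v
  have P2 := prodP2 E u v
  have P3 := prodP3 E u v
  have P4 := prodP4 E u v
  simp only [hE, hsu, hsv] at P1 P2 P3 P4
  have hsumE : (1 - (2 * (j : ℝ) / (K : ℝ) - 1)) / 2 = 1 - (j : ℝ) / (K : ℝ) := by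
    field_simp; ring
  have hdiff : ((2 * (j : ℝ) / (K : ℝ) - 1) - (2 * ((j : ℝ) - 1) / (K : ℝ) - 1)) / 2
      = 1 / (K : ℝ) := by field_simp; ring
  have hsumU : (1 + (2 * ((j : ℝ) - 1) / (K : ℝ) - 1)) / 2 = ((j : ℝ) - 1) / (K : ℝ) := by
    field_simp; ring
  have hK2 : 1 / (2 * (K : ℝ)) + 1 / (2 * (K : ℝ)) = 1 / (K : ℝ) := by
    field_simp
    norm_num
  rw [hsumE] at P1
  rw [hdiff] at P2
  rw [hsumU] at P3
  refine ⟨?_, ?_, ?_, ?_⟩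
  · constructor <;> intro h <;> linarith [P1, h]
  · constructor <;> intro h <;> linarith [P2, hK2, h]
  · constructor <;> intro h <;> linarith [P3, hK2, h]
  · intro h
    have h3 : d / 2 + 1 / (2 * (K : ℝ)) =
        Real.cosh ((E + u) / 2) * Real.sinh ((v - u) / 2) * Real.cosh ((E - v) / 2) := by
      linarith [P2, hK2, h]
    linarith [P4, h, h3]
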